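/- For every n ≥ 1 and every N ≥ C(2n, n) (the central binomial coefficient), every strictly increasing sequence (a₁,…,a_N) of real numbers has an n-term subsequence b = (b₁,…,bₙ) such that either b satisfies the doubling differences condition, or the sequence (−bₙ, −b_{n−1}, …, −b₁) satisfies the doubling differences condition. -/

import Mathlib

/-- A sequence `b` satisfies the doubling differences condition (DDC) if
`|b_k − b_i| ≥ 2·|b_j − b_i|` for all `i < j < k`. -/
def DDC {n : ℕ} (b : Fin n → ℝ) : Prop :=
  ∀ i j l : Fin n, i < j → j < l → 2 * |b j - b i| ≤ |b l - b i|

/-- "Left-good": sorted list whose distances from the head double. -/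
def LG : List ℝ → Prop
  | [] => True
  | h :: t => List.IsChain (fun x y => x < y ∧ 2 * (x - h) ≤ y - h) t

/-- "Right-good": reversal/negation is left-good. -/
def RG (l : List ℝ) : Prop := LG (l.reverse.map (fun x => -x))

lemma LG_singleton (x : ℝ) : LG [x] := by simp [LG]

lemma RG_singleton (x : ℝ) : RG [x] := by simp [RG, LG]

lemma LG_append (h0 : ℝ) (t : List ℝ) (c : ℝ)
    (hLG : LG (h0 :: t))
    (hlt : ∀ x ∈ h0 :: t, x < c ∧ 2 * (x - h0) ≤ c - h0) :
    LG ((h0 :: t) ++ [c]) := by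
  show List.IsChain _ (t ++ [c])
  rw [List.isChain_append]
  refine ⟨hLG, List.isChain_singleton _, ?_⟩
  intro x hx y hy
  simp only [List.head?_cons, Option.mem_def, Option.some.injEq] at hy
  subst hy
  exact hlt x (List.mem_cons_of_mem _ (List.mem_of_mem_getLast? hx))

lemma key : ∀ k p q : ℕ, p + q ≤ k → ∀ S : Finset ℝ,
    Nat.choose (p + q) p ≤ S.card →
    (∃ l : List ℝ, l.length = p + 1 ∧ l.IsChain (· < ·) ∧ (∀ x ∈ l, x ∈ S) ∧ LG l) ∨
    (∃ l : List ℝ, l.length = q + 1 ∧ l.IsChain (· < ·) ∧ (∀ x ∈ l, x ∈ S) ∧ RG l) := by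
  intro k
  induction k with
  | zero =>
    intro p q hpq S hS
    have hp : p = 0 := by omega
    have hq : q = 0 := by omega
    subst hp; subst hq
    have hne : S.Nonempty := Finset.card_pos.mp (by simpa using hS)
    exact Or.inl ⟨[S.min' hne], rfl, List.isChain_singleton _,
      by simp [Finset.min'_mem], LG_singleton _⟩
  | succ k ih =>
    intro p q hpq S hS
    match p, q with
    | 0, q =>
      have hne : S.Nonempty := Finset.card_pos.mp (by
        have := Nat.choose_pos (show 0 ≤ 0 + q by omega); omega)
      exact Or.inl ⟨[S.min' hne], rfl, List.isChain_singleton _,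
        by simp [Finset.min'_mem], LG_singleton _⟩
    | p + 1, 0 =>
      have hne : S.Nonempty := Finset.card_pos.mp (by
        have := Nat.choose_pos (show p + 1 ≤ p + 1 + 0 by omega); omega)
      exact Or.inr ⟨[S.min' hne], rfl, List.isChain_singleton _,
        by simp [Finset.min'_mem], RG_singleton _⟩
    | p + 1, q + 1 =>
      have hP : Nat.choose (p + 1 + (q + 1)) (p + 1)
          = Nat.choose (p + q + 1) p + Nat.choose (p + q + 1) (p + 1) := by
        have h1 : p + 1 + (q + 1) = (p + q + 1) + 1 := by omega
        rw [h1, Nat.choose_succ_succ]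
      rw [hP] at hS
      have hpos1 : 0 < Nat.choose (p + q + 1) p := Nat.choose_pos (by omega)
      have hpos2 : 0 < Nat.choose (p + q + 1) (p + 1) := Nat.choose_pos (by omega)
      have h2 : 2 ≤ S.card := by omega
      have hne : S.Nonempty := Finset.card_pos.mp (by omega)
      set a := S.min' hne with ha
      set b := S.max' hne with hb
      have hab : a < b := S.min'_lt_max'_of_card (by omega)
      set m : ℝ := (a + b) / 2 with hm
      classical
      set A := S.filter (fun x => x ≤ m) with hA
      set B := S.filter (fun x => ¬ x ≤ m) with hB
      have hcard : A.card + B.card = S.card :=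
        Finset.card_filter_add_card_filter_not _
      rcases (show Nat.choose (p + q + 1) p ≤ A.card
          ∨ Nat.choose (p + q + 1) (p + 1) ≤ B.card by omega) with hbig | hbig
      · -- A is big : use (p, q+1)
        rcases ih p (q + 1) (by omega) A (by
            have he : p + (q + 1) = p + q + 1 := by omega
            rw [he]; exact hbig) with ⟨l, hlen, hch, hmem, hLGl⟩ | ⟨l, hlen, hch, hmem, hRGl⟩
        · -- extend by b
          left
          have hmemS : ∀ x ∈ l, x ∈ S ∧ x ≤ m := by
            intro x hx
            have := hmem x hx
            rw [hA, Finset.mem_filter] at this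
            exact this
          have hbS : b ∈ S := S.max'_mem hne
          have hmb : m < b := by rw [hm]; linarith
          obtain ⟨h0, t, rfl⟩ : ∃ h0 t, l = h0 :: t := by
            cases l with
            | nil => simp at hlen
            | cons x xs => exact ⟨x, xs, rfl⟩
          have hah0 : a ≤ h0 := S.min'_le _ (hmemS h0 (List.mem_cons_self)).1
          have hlink : ∀ x ∈ h0 :: t, x < b ∧ 2 * (x - h0) ≤ b - h0 := by
            intro x hx
            have hxm := (hmemS x hx).2
            constructor
            · linarith
            · rw [hm] at hxm; linarith
          refine ⟨(h0 :: t) ++ [b], by simp at hlen ⊢; omega, ?_, ?_, LG_append _ _ _ hLGl hlink⟩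
          · rw [List.isChain_append]
            refine ⟨hch, List.isChain_singleton _, ?_⟩
            intro x hx y hy
            simp only [List.head?_cons, Option.mem_def, Option.some.injEq] at hy
            subst hy
            exact (hlink x (List.mem_of_mem_getLast? hx)).1
          · intro x hx
            rcases List.mem_append.mp hx with hx | hx
            · exact (hmemS x hx).1
            · simp at hx; subst hx; exact hbS
        · exact Or.inr ⟨l, hlen, hch, fun x hx => Finset.mem_of_mem_filter x (hmem x hx), hRGl⟩
      · -- B is big : use (p+1, q)
        rcases ih (p + 1) q (by omega) B (by
            have he : p + 1 + q = p + q + 1 := by omega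
            rw [he]; exact hbig) with ⟨l, hlen, hch, hmem, hLGl⟩ | ⟨l, hlen, hch, hmem, hRGl⟩
        · exact Or.inl ⟨l, hlen, hch, fun x hx => Finset.mem_of_mem_filter x (hmem x hx), hLGl⟩
        · -- prepend a
          right
          have hmemS : ∀ x ∈ l, x ∈ S ∧ m < x := by
            intro x hx
            have := hmem x hx
            rw [hB, Finset.mem_filter] at this
            exact ⟨this.1, not_le.mp this.2⟩
          have haS : a ∈ S := S.min'_mem hne
          have ham : a < m := by rw [hm]; linarith
          have hub : ∀ x ∈ l, x ≤ b := fun x hx => S.le_max' _ (hmemS x hx).1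
          -- the mapped list
          set L : List ℝ := l.reverse.map (fun x => -x) with hL
          have hLmem : ∀ x ∈ L, ∃ y ∈ l, x = -y := by
            intro x hx
            rw [hL, List.mem_map] at hx
            obtain ⟨y, hy, rfl⟩ := hx
            exact ⟨y, List.mem_reverse.mp hy, rfl⟩
          obtain ⟨h0, t, hLeq⟩ : ∃ h0 t, L = h0 :: t := by
            have : L ≠ [] := by
              rw [hL]; simp
              intro hnil; rw [hnil] at hlen; simp at hlen
            exact List.exists_cons_of_ne_nil this
          obtain ⟨y0, hy0l, hy0⟩ := hLmem h0 (hLeq ▸ List.mem_cons_self)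
          have hRGal : RG (a :: l) := by
            show LG ((a :: l).reverse.map (fun x => -x))
            have : (a :: l).reverse.map (fun x => -x) = L ++ [-a] := by
              rw [hL, List.reverse_cons, List.map_append]; simp
            rw [this, hLeq]
            apply LG_append _ _ _ (hLeq ▸ hRGl)
            intro x hx
            obtain ⟨y, hyl, rfl⟩ := hLmem x (hLeq ▸ hx)
            have hym := (hmemS y hyl).2
            have hy0b := hub y0 hy0l
            have hy0m := (hmemS y0 hy0l).2
            subst hy0
            constructor
            · rw [hm] at hym; linarith
            · rw [hm] at hym; linarith
          refine ⟨a :: l, by simp at hlen ⊢; omega, ?_, ?_, hRGal⟩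
          · rw [List.isChain_cons]
            refine ⟨?_, hch⟩
            intro y hy
            have := (hmemS y (List.mem_of_mem_head? hy)).2
            linarith
          · intro x hx
            rcases List.mem_cons.mp hx with hx | hx
            · subst hx; exact haS
            · exact (hmemS x hx).1

lemma DDC_of_LG {n : ℕ} (l : List ℝ) (hn : l.length = n)
    (hs : l.IsChain (· < ·)) (hg : LG l)
    (b : Fin n → ℝ) (hb : ∀ j : Fin n, b j = l.get (Fin.cast hn.symm j)) :
    DDC b := by
  intro i j kk hij hjk
  -- l is a cons
  obtain ⟨h0, t, rfl⟩ : ∃ h0 t, l = h0 :: t := by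
    cases l with
    | nil => subst hn; exact absurd i.2 (by simp)
    | cons x xs => exact ⟨x, xs, rfl⟩
  have hpl : (h0 :: t).Pairwise (· < ·) := List.isChain_iff_pairwise.mp hs
  have hmono : ∀ u v : Fin n, u < v → b u < b v := by
    intro u v huv
    rw [hb, hb]
    exact List.pairwise_iff_get.mp hpl _ _ huv
  -- tail pairwise for the doubling relation
  have htrans : IsTrans ℝ (fun x y => x < y ∧ 2 * (x - h0) ≤ y - h0) :=
    ⟨fun x y z hxy hyz => ⟨hxy.1.trans hyz.1, by
      have := hxy.2; have := hyz.2; have := hyz.1; linarith⟩⟩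
  have hpt : t.Pairwise (fun x y => x < y ∧ 2 * (x - h0) ≤ y - h0) :=
    (haveI := htrans; List.isChain_iff_pairwise.mp hg)
  -- b of a positive index is a get of t
  have hbt : ∀ (u : Fin n) (hu : 0 < u.1), b u = t.get ⟨u.1 - 1, by
      have := u.2; simp at hn; omega⟩ := by
    intro u hu
    rw [hb]
    have h1 : (Fin.cast hn.symm u : Fin (h0 :: t).length) = ⟨(u.1 - 1) + 1, by
        have := u.2; simp at hn ⊢; omega⟩ := by
      apply Fin.ext; simp; omega
    rw [h1, List.get_cons_succ]
  -- head is a lower bound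
  have hb0 : h0 ≤ b i := by
    rcases Nat.eq_zero_or_pos i.1 with h | h
    · rw [hb]
      have h1 : (Fin.cast hn.symm i : Fin (h0 :: t).length) = ⟨0, by simp⟩ := by
        apply Fin.ext; simp [h]
      rw [h1]
      simp
    · have hi2 : i.1 < (h0 :: t).length := by have := i.2; simp at hn ⊢; omega
      have hlt := List.pairwise_iff_get.mp hpl ⟨0, by simp⟩ ⟨i.1, hi2⟩ (by rw [Fin.lt_def]; simpa using h)
      have hget : (h0 :: t).get ⟨i.1, hi2⟩ = b i := (hb i).symm
      rw [hget] at hlt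
      simp only [List.get_eq_getElem, List.getElem_cons_zero] at hlt
      exact le_of_lt hlt
  -- the doubling inequality between j and kk
  have hjk1 : 0 < j.1 := by
    have : i.1 < j.1 := hij
    omega
  have hkk1 : 0 < kk.1 := lt_trans hjk1 hjk
  have hdbl : 2 * (b j - h0) ≤ b kk - h0 := by
    rw [hbt j hjk1, hbt kk hkk1]
    have := List.pairwise_iff_get.mp hpt
      ⟨j.1 - 1, by have := j.2; simp at hn; omega⟩
      ⟨kk.1 - 1, by have := kk.2; simp at hn; omega⟩
      (by simp [Fin.lt_def]; have : j.1 < kk.1 := hjk; omega)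
    exact this.2
  have h1 : b i < b j := hmono _ _ hij
  have h2 : b j < b kk := hmono _ _ hjk
  rw [abs_of_pos (by linarith), abs_of_pos (by linarith)]
  linarith

theorem stmt10 (n : ℕ) (hn : 1 ≤ n) (N : ℕ) (hN : Nat.choose (2 * n) n ≤ N)
    (a : Fin N → ℝ) (ha : StrictMono a) :
    ∃ φ : Fin n → Fin N, StrictMono φ ∧
      (DDC (fun j => a (φ j)) ∨ DDC (fun j : Fin n => -(a (φ j.rev)))) := by
  classical
  have hb2 : Nat.choose ((n - 1) + (n - 1)) (n - 1) ≤ N := by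
    calc Nat.choose ((n - 1) + (n - 1)) (n - 1)
        ≤ Nat.choose (2 * n) (n - 1) := Nat.choose_le_choose _ (by omega)
      _ ≤ Nat.choose (2 * n) ((2 * n) / 2) := Nat.choose_le_middle _ _
      _ = Nat.choose (2 * n) n := by congr 1; omega
      _ ≤ N := hN
  set S : Finset ℝ := Finset.image a Finset.univ with hSdef
  have hcard : S.card = N := by
    rw [hSdef, Finset.card_image_of_injective _ ha.injective, Finset.card_univ,
      Fintype.card_fin]
  rcases key ((n - 1) + (n - 1)) (n - 1) (n - 1) le_rfl S (by omega)
    with ⟨l, hlen, hch, hmem, hLGl⟩ | ⟨l, hlen, hch, hmem, hRGl⟩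
  all_goals {
    have hlen' : l.length = n := by omega
    have hexists : ∀ j : Fin n, ∃ i : Fin N, a i = l.get (Fin.cast hlen'.symm j) := by
      intro j
      have := hmem _ (List.get_mem l (Fin.cast hlen'.symm j))
      rw [hSdef, Finset.mem_image] at this
      obtain ⟨i, _, hi⟩ := this
      exact ⟨i, hi⟩
    choose φ hφ using hexists
    have hpl : l.Pairwise (· < ·) := List.isChain_iff_pairwise.mp hch
    have hφmono : StrictMono φ := by
      intro u v huv
      have h1 : a (φ u) < a (φ v) := by
        rw [hφ, hφ]
        exact List.pairwise_iff_get.mp hpl _ _ huv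
      exact ha.lt_iff_lt.mp h1
    refine ⟨φ, hφmono, ?_⟩
    first
    | · left
        exact DDC_of_LG l hlen' hch hLGl _ (fun j => hφ j)
    | · right
        have hLlen : (l.reverse.map (fun x => -x)).length = n := by simp [hlen']
        have hLch : (l.reverse.map (fun x => -x)).IsChain (· < ·) := by
          rw [List.isChain_map, List.isChain_reverse]
          simpa [flip] using hch
        apply DDC_of_LG _ hLlen hLch hRGl
        intro j
        show -(a (φ j.rev)) = _
        rw [hφ j.rev]
        have h2 : ((l.reverse.map (fun x => -x)).get (Fin.cast hLlen.symm j))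
            = -(l.get (Fin.cast hlen'.symm j.rev)) := by
          simp only [List.get_eq_getElem, List.getElem_map, List.getElem_reverse]
          congr 2
          simp only [Fin.coe_cast, Fin.val_rev]
          omega
        exact h2.symm
  }
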